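/- The function Φ_t on P_s given by Φ_t(X) = Σ_{k=k₀}^{min(j,t)} (−1)^k C(s−j, t−k) C(j,k) γ_t^k, where j = d(X₀,X), γ_t^k = C(s,t)^{−1} · (s−t+k)!(n−s−k)! / ((s−t)!(n−s)!), and k₀ = max(0, t+j−s), is the spherical function of the irreducible component H^t of L²(P_s); in particular Φ_t(X₀) = 1 and Φ_t is invariant under the stabilizer of X₀. -/

import Mathlib

open Finset


/-- `Pset n s` is the set of `s`-element subsets of `{1,…,n}`. -/
abbrev Pset (n s : ℕ) := {X : Finset (Fin n) // X.card = s}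

/-- The Radon transform `R_s : L²(P_s) → L²(P_{s+1})`. -/
noncomputable def Radon (n s : ℕ) (f : Pset n s → ℂ) (X : Pset n (s + 1)) : ℂ :=
  ∑ Z : Pset n s, if Z.1 ⊆ X.1 then f Z else 0

/-- The iterated Radon transform `R_{t+m-1} ∘ ⋯ ∘ R_t : L²(P_t) → L²(P_{t+m})`. -/
noncomputable def RadonIter (n t : ℕ) : (m : ℕ) → (Pset n t → ℂ) → (Pset n (t + m) → ℂ)
  | 0, f => f
  | m + 1, f => Radon n (t + m) (RadonIter n t m f)



/-- number of `t`-subsets of `A ∪ B` meeting `A` in exactly `i` elements. -/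
lemma aux_count_split {α : Type*} [DecidableEq α] (A B : Finset α) (hAB : Disjoint A B)
    (t i : ℕ) (hit : i ≤ t) :
    (((A ∪ B).powersetCard t).filter fun Y => (Y ∩ A).card = i).card
      = A.card.choose i * B.card.choose (t - i) := by
  rw [← card_powersetCard, ← card_powersetCard, ← card_product]
  apply Finset.card_nbij' (fun Y => (Y ∩ A, Y ∩ B)) (fun P => P.1 ∪ P.2)
  · intro Y hY
    simp only [mem_coe, mem_filter, mem_powersetCard] at hY
    obtain ⟨⟨hYs, hYc⟩, hYi⟩ := hY
    have h1 : Y ∩ A ∪ Y ∩ B = Y := by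
      rw [← inter_union_distrib_left]; exact inter_eq_left.2 hYs
    have hd : Disjoint (Y ∩ A) (Y ∩ B) := hAB.mono inter_subset_right inter_subset_right
    have hc : (Y ∩ A).card + (Y ∩ B).card = t := by
      rw [← card_union_of_disjoint hd, h1, hYc]
    simp only [mem_coe, mem_product, mem_powersetCard]
    exact ⟨⟨inter_subset_right, hYi⟩, inter_subset_right, by omega⟩
  · intro P hP
    simp only [mem_coe, mem_product, mem_powersetCard] at hP
    obtain ⟨⟨h1, h2⟩, h3, h4⟩ := hP
    have hd : Disjoint P.1 P.2 := hAB.mono h1 h3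
    have hPA : (P.1 ∪ P.2) ∩ A = P.1 := by
      rw [union_inter_distrib_right, inter_eq_left.2 h1,
        disjoint_iff_inter_eq_empty.1 (hAB.symm.mono_left h3), union_empty]
    simp only [mem_coe, mem_filter, mem_powersetCard]
    refine ⟨⟨union_subset_union h1 h3, ?_⟩, by rw [hPA, h2]⟩
    rw [card_union_of_disjoint hd]; omega
  · intro Y hY
    simp only [mem_coe, mem_filter, mem_powersetCard] at hY
    show Y ∩ A ∪ Y ∩ B = Y
    rw [← inter_union_distrib_left]; exact inter_eq_left.2 hY.1.1
  · intro P hP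
    simp only [mem_coe, mem_product, mem_powersetCard] at hP
    obtain ⟨⟨h1, h2⟩, h3, h4⟩ := hP
    have hPA : (P.1 ∪ P.2) ∩ A = P.1 := by
      rw [union_inter_distrib_right, inter_eq_left.2 h1,
        disjoint_iff_inter_eq_empty.1 (hAB.symm.mono_left h3), union_empty]
    have hPB : (P.1 ∪ P.2) ∩ B = P.2 := by
      rw [union_inter_distrib_right, inter_eq_left.2 h3,
        disjoint_iff_inter_eq_empty.1 (hAB.mono_left h1), empty_union]
    exact Prod.ext hPA hPB

lemma aux_sum_split {α : Type*} [DecidableEq α] (A B : Finset α) (hAB : Disjoint A B)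
    (t : ℕ) (g : ℕ → ℂ) :
    ∑ Y ∈ (A ∪ B).powersetCard t, g (Y ∩ A).card
      = ∑ i ∈ Finset.range (t + 1), (A.card.choose i * B.card.choose (t - i) : ℕ) * g i := by
  rw [← Finset.sum_fiberwise_of_maps_to (t := Finset.range (t + 1))
      (g := fun Y => (Y ∩ A).card) (fun Y hY => ?_) (fun Y => g (Y ∩ A).card)]
  · refine Finset.sum_congr rfl fun i hi => ?_
    rw [Finset.mem_range] at hi
    rw [Finset.sum_congr rfl (fun Y hY => by rw [(Finset.mem_filter.1 hY).2]),
      Finset.sum_const, aux_count_split A B hAB t i (by omega), nsmul_eq_mul]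
  · rw [mem_powersetCard] at hY
    simp only [Finset.mem_range]
    show (Y ∩ A).card < t + 1
    have := card_le_card ((inter_subset_left : Y ∩ A ⊆ Y))
    omega

lemma aux_sum_pset {n s : ℕ} (F : Finset (Fin n) → ℂ) :
    ∑ Y : Pset n s, F Y.1 = ∑ Y ∈ (Finset.univ : Finset (Fin n)).powersetCard s, F Y :=
  (Finset.sum_subtype (Finset.univ.powersetCard s)
    (fun Y => by simp [Finset.mem_powersetCard]) F).symm

lemma aux_between {n t m : ℕ} (Y : Finset (Fin n)) (hY : Y.card = t)
    (X : Finset (Fin n)) (hX : X.card = t + m + 1) (hYX : Y ⊆ X) :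
    (Finset.univ.filter fun Z : Pset n (t + m) => Y ⊆ Z.1 ∧ Z.1 ⊆ X).card = m + 1 := by
  have hkey : ((X \ Y).powersetCard m).card = m + 1 := by
    rw [card_powersetCard, card_sdiff_of_subset hYX, hX, hY, show t + m + 1 - t = m + 1 by omega,
      Nat.choose_succ_self_right]
  have hcard : ∀ W ∈ (X \ Y).powersetCard m, (W ∪ Y).card = t + m := by
    intro W hW
    have h := mem_powersetCard.1 hW
    rw [card_union_of_disjoint (sdiff_disjoint.mono_left h.1), h.2, hY]
    omega
  rw [← hkey]
  apply Finset.card_bij' (fun Z _ => Z.1 \ Y)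
    (fun W hW => (⟨W ∪ Y, hcard W hW⟩ : Pset n (t + m)))
  case hi =>
    intro Z hZ
    simp only [mem_filter, mem_univ, true_and] at hZ
    rw [mem_powersetCard]
    exact ⟨sdiff_subset_sdiff hZ.2 le_rfl, by rw [card_sdiff_of_subset hZ.1, Z.2, hY]; omega⟩
  case hj =>
    intro W hW
    have h := mem_powersetCard.1 hW
    simp only [mem_filter, mem_univ, true_and]
    exact ⟨subset_union_right, union_subset (h.1.trans sdiff_subset) hYX⟩
  case left_inv =>
    intro Z hZ
    simp only [mem_filter, mem_univ, true_and] at hZ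
    exact Subtype.ext (sdiff_union_of_subset hZ.1)
  case right_inv =>
    intro W hW
    have h := mem_powersetCard.1 hW
    exact union_sdiff_cancel_right (sdiff_disjoint.mono_left h.1)

lemma aux_radonIter (n t : ℕ) (g : Pset n t → ℂ) (m : ℕ) :
    ∀ X : Pset n (t + m), RadonIter n t m g X
      = ∑ Y : Pset n t, if Y.1 ⊆ X.1 then (m.factorial : ℂ) * g Y else 0 := by
  induction m with
  | zero =>
    intro X
    show g X = _
    symm
    refine (Finset.sum_eq_single X ?_ ?_).trans ?_
    · intro Y _ hne
      rw [if_neg]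
      intro hsub
      exact hne (Subtype.ext (Finset.eq_of_subset_of_card_le hsub (by rw [Y.2, X.2])))
    · intro hmem; exact absurd (Finset.mem_univ X) hmem
    · simp
  | succ m ih =>
    intro X
    show Radon n (t + m) (RadonIter n t m g) X = _
    unfold Radon
    have step1 : ∀ Z : Pset n (t + m),
        (if Z.1 ⊆ X.1 then RadonIter n t m g Z else 0)
          = ∑ Y : Pset n t, if Y.1 ⊆ Z.1 ∧ Z.1 ⊆ X.1 then (m.factorial : ℂ) * g Y else 0 := by
      intro Z
      by_cases hZ : Z.1 ⊆ X.1
      · rw [if_pos hZ, ih Z]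
        refine Finset.sum_congr rfl fun Y _ => ?_
        simp [hZ]
      · rw [if_neg hZ]
        simp [hZ]
    rw [Finset.sum_congr rfl fun Z _ => step1 Z, Finset.sum_comm]
    refine Finset.sum_congr rfl fun Y _ => ?_
    rw [Finset.sum_ite, Finset.sum_const, Finset.sum_const_zero, add_zero, nsmul_eq_mul]
    by_cases hY : Y.1 ⊆ X.1
    · rw [if_pos hY, aux_between Y.1 Y.2 X.1 X.2 hY]
      rw [Nat.factorial_succ]
      push_cast
      ring
    · rw [if_neg hY]
      have hempty : (Finset.univ.filter fun Z : Pset n (t + m) => Y.1 ⊆ Z.1 ∧ Z.1 ⊆ X.1) = ∅ :=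
        Finset.filter_false_of_mem fun Z _ h => hY (h.1.trans h.2)
      rw [hempty]
      simp

noncomputable def sphF (n t m : ℕ) (i : ℕ) : ℂ :=
  (-1) ^ (t + i) * (Nat.factorial (n - (t + m) - t + i) : ℂ) * (Nat.factorial (t + m - i) : ℂ) /
    ((Nat.choose (t + m) t : ℂ) * (Nat.factorial m : ℂ) ^ 2 * (Nat.factorial (n - (t + m)) : ℂ))

lemma sphF_rec (n t m : ℕ) (hs : 2 * (t + m) ≤ n) (i : ℕ) (hi : i + 1 ≤ t) :
    ((t + m - i : ℕ) : ℂ) * sphF n t m (i + 1)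
      + ((n - (t + m) - t + i + 1 : ℕ) : ℂ) * sphF n t m i = 0 := by
  unfold sphF
  rw [show t + (i + 1) = (t + i) + 1 from rfl, pow_succ,
    show n - (t + m) - t + (i + 1) = (n - (t + m) - t + i) + 1 from rfl,
    Nat.factorial_succ (n - (t + m) - t + i),
    show t + m - i = (t + m - (i + 1)) + 1 by omega,
    Nat.factorial_succ (t + m - (i + 1))]
  push_cast
  ring

lemma aux_kernel (n t m : ℕ) (hs : 2 * (t + m) ≤ n) (X₀ : Pset n (t + m))
    (Z : Finset (Fin n)) (hZ : Z.card + 1 = t) :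
    (∑ Y : Pset n t, if Z ⊆ Y.1 then sphF n t m ((Y.1 ∩ X₀.1).card) else 0) = 0 := by
  classical
  have key : (∑ Y : Pset n t, if Z ⊆ Y.1 then sphF n t m ((Y.1 ∩ X₀.1).card) else 0)
      = ∑ x ∈ Finset.univ \ Z, sphF n t m (((insert x Z) ∩ X₀.1).card) := by
    rw [aux_sum_pset (F := fun W => if Z ⊆ W then sphF n t m ((W ∩ X₀.1).card) else 0),
      ← Finset.sum_filter]
    symm
    apply Finset.sum_bij (fun x _ => insert x Z)
    · intro x hx
      have hxZ : x ∉ Z := (Finset.mem_sdiff.1 hx).2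
      simp only [Finset.mem_filter, Finset.mem_powersetCard]
      exact ⟨⟨Finset.subset_univ _, by rw [Finset.card_insert_of_notMem hxZ, hZ]⟩,
        Finset.subset_insert _ _⟩
    · intro x hx y hy hxy
      exact (Finset.insert_inj (Finset.mem_sdiff.1 hx).2).1 hxy
    · intro W hW
      simp only [Finset.mem_filter, Finset.mem_powersetCard] at hW
      obtain ⟨⟨-, hWc⟩, hZW⟩ := hW
      have h1 : (W \ Z).card = 1 := by rw [Finset.card_sdiff_of_subset hZW, hWc]; omega
      obtain ⟨x, hx⟩ := Finset.card_eq_one.1 h1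
      have hxW : x ∈ W \ Z := hx ▸ Finset.mem_singleton_self x
      refine ⟨x, Finset.mem_sdiff.2 ⟨Finset.mem_univ x, (Finset.mem_sdiff.1 hxW).2⟩, ?_⟩
      rw [Finset.insert_eq, ← hx, Finset.sdiff_union_of_subset hZW]
    · intro x hx; rfl
  rw [key]
  set i := (Z ∩ X₀.1).card with hidef
  have hiA : (X₀.1 ∩ Z).card = i := by rw [Finset.inter_comm]
  have hile : i ≤ Z.card := Finset.card_le_card Finset.inter_subset_left
  have hsplit : Finset.univ \ Z = (X₀.1 \ Z) ∪ ((Finset.univ \ Z) \ X₀.1) := by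
    ext x
    simp only [Finset.mem_sdiff, Finset.mem_union, Finset.mem_univ, true_and]
    tauto
  have hdisj : Disjoint (X₀.1 \ Z) ((Finset.univ \ Z) \ X₀.1) := by
    rw [Finset.disjoint_left]
    intro a ha hb
    exact (Finset.mem_sdiff.1 hb).2 (Finset.mem_sdiff.1 ha).1
  rw [hsplit, Finset.sum_union hdisj]
  have hval1 : ∀ x ∈ X₀.1 \ Z,
      sphF n t m (((insert x Z) ∩ X₀.1).card) = sphF n t m (i + 1) := by
    intro x hx
    obtain ⟨hx1, hx2⟩ := Finset.mem_sdiff.1 hx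
    rw [Finset.insert_inter_of_mem hx1, Finset.card_insert_of_notMem
      (fun hmem => hx2 (Finset.mem_inter.1 hmem).1)]
  have hval2 : ∀ x ∈ (Finset.univ \ Z) \ X₀.1,
      sphF n t m (((insert x Z) ∩ X₀.1).card) = sphF n t m i := by
    intro x hx
    rw [Finset.insert_inter_of_notMem (Finset.mem_sdiff.1 hx).2]
  rw [Finset.sum_congr rfl hval1, Finset.sum_congr rfl hval2,
    Finset.sum_const, Finset.sum_const, nsmul_eq_mul, nsmul_eq_mul]
  have hc1 : (X₀.1 \ Z).card = t + m - i := by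
    have := Finset.card_sdiff_add_card_inter X₀.1 Z
    rw [hiA, X₀.2] at this
    omega
  have hc2 : ((Finset.univ \ Z) \ X₀.1).card = n - (t + m) - t + i + 1 := by
    have he : (Finset.univ \ Z) \ X₀.1 = Finset.univ \ (Z ∪ X₀.1) := by
      ext x
      simp only [Finset.mem_sdiff, Finset.mem_union, Finset.mem_univ, true_and]
      tauto
    have hu := Finset.card_union_add_card_inter Z X₀.1
    rw [X₀.2] at hu
    have hle : (Z ∪ X₀.1).card ≤ n := by
      simpa using Finset.card_le_card (Finset.subset_univ (Z ∪ X₀.1))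
    rw [he, Finset.card_sdiff_of_subset (Finset.subset_univ _)]
    simp only [Finset.card_univ, Fintype.card_fin]
    omega
  rw [hc1, hc2]
  exact sphF_rec n t m hs i (by omega)

lemma aux_main (n t m : ℕ) (hs : 2 * (t + m) ≤ n) (X₀ X : Pset n (t + m)) :
    RadonIter n t m (fun Y => sphF n t m ((Y.1 ∩ X₀.1).card)) X
      = ∑ k ∈ Finset.Icc (t + (((t + m) - (X₀.1 ∩ X.1).card)) - (t + m))
          (min ((t + m) - (X₀.1 ∩ X.1).card) t),
        (-1 : ℂ) ^ k *
          (Nat.choose ((t + m) - ((t + m) - (X₀.1 ∩ X.1).card)) (t - k)) *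
          (Nat.choose ((t + m) - (X₀.1 ∩ X.1).card) k) *
          ((Nat.factorial (m + k) * Nat.factorial (n - (t + m) - k) : ℂ) /
            ((Nat.choose (t + m) t) * Nat.factorial m * Nat.factorial (n - (t + m)))) := by
  classical
  set a := (X₀.1 ∩ X.1).card with ha
  have haX : (X.1 ∩ X₀.1).card = a := by rw [ha, Finset.inter_comm]
  have hale : a ≤ t + m := by
    have h := Finset.card_le_card (Finset.inter_subset_left : X₀.1 ∩ X.1 ⊆ X₀.1)
    rw [X₀.2] at h
    exact h
  -- compute the left-hand side
  rw [aux_radonIter,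
    aux_sum_pset (F := fun W => if W ⊆ X.1 then (m.factorial : ℂ) *
      sphF n t m ((W ∩ X₀.1).card) else 0),
    ← Finset.sum_filter]
  have hfil : (Finset.univ.powersetCard t).filter (fun W => W ⊆ X.1) = X.1.powersetCard t := by
    ext W
    simp only [Finset.mem_filter, Finset.mem_powersetCard, Finset.subset_univ, true_and]
    tauto
  rw [hfil]
  have hdisj : Disjoint (X.1 ∩ X₀.1) (X.1 \ X₀.1) :=
    Finset.disjoint_left.2 fun x hx hx' => (Finset.mem_sdiff.1 hx').2 (Finset.mem_inter.1 hx).2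
  have hXsplit : (X.1 ∩ X₀.1) ∪ (X.1 \ X₀.1) = X.1 := by
    ext x
    simp only [Finset.mem_inter, Finset.mem_union, Finset.mem_sdiff]
    tauto
  rw [show X.1.powersetCard t = ((X.1 ∩ X₀.1) ∪ (X.1 \ X₀.1)).powersetCard t by rw [hXsplit]]
  have hcongr : ∀ W ∈ ((X.1 ∩ X₀.1) ∪ (X.1 \ X₀.1)).powersetCard t,
      (m.factorial : ℂ) * sphF n t m ((W ∩ X₀.1).card)
        = (fun j => (m.factorial : ℂ) * sphF n t m j) ((W ∩ (X.1 ∩ X₀.1)).card) := by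
    intro W hW
    have hWX : W ⊆ X.1 := by
      have h := (Finset.mem_powersetCard.1 hW).1
      rwa [hXsplit] at h
    have h2 : W ∩ (X.1 ∩ X₀.1) = W ∩ X₀.1 := by
      rw [← Finset.inter_assoc, Finset.inter_eq_left.2 hWX]
    rw [h2]
  rw [Finset.sum_congr rfl hcongr, aux_sum_split _ _ hdisj t
    (fun j => (m.factorial : ℂ) * sphF n t m j)]
  have hb : (X.1 \ X₀.1).card = t + m - a := by
    have h := Finset.card_sdiff_add_card_inter X.1 X₀.1
    rw [haX, X.2] at h
    omega
  rw [haX, hb]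
  -- extend the right-hand sum from the Icc to the full range
  have hsub : Finset.Icc (t + ((t + m) - a) - (t + m)) (min ((t + m) - a) t)
      ⊆ Finset.range (t + 1) := by
    intro k hk
    rw [Finset.mem_Icc] at hk
    rw [Finset.mem_range]
    omega
  rw [Finset.sum_subset hsub ?van]
  case van =>
    intro k hk hnk
    rw [Finset.mem_range] at hk
    rw [Finset.mem_Icc, not_and_or, not_le, not_le] at hnk
    rcases hnk with hnk | hnk
    · have h1 : (t + m) - ((t + m) - a) = a := by omega
      have h2 : a < t - k := by omega
      rw [h1, Nat.choose_eq_zero_of_lt h2]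
      simp
    · have h2 : (t + m) - a < k := by omega
      rw [Nat.choose_eq_zero_of_lt h2]
      simp
  -- reflect the summation index
  rw [← Finset.sum_range_reflect]
  refine Finset.sum_congr rfl fun i hi => ?_
  rw [Finset.mem_range] at hi
  have hit : i ≤ t := by omega
  simp only [Nat.add_sub_cancel]
  have e1 : (t + m) - ((t + m) - a) = a := by omega
  have e2 : t - (t - i) = i := by omega
  rw [e1, e2]
  unfold sphF
  rw [show n - (t + m) - t + (t - i) = n - (t + m) - i by omega,
    show t + m - (t - i) = m + i by omega,
    show (-1 : ℂ) ^ (t + (t - i)) = (-1) ^ i by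
      rw [show t + (t - i) = i + 2 * (t - i) by omega, pow_add, pow_mul]
      norm_num]
  have hC : (((t + m).choose t : ℕ) : ℂ) ≠ 0 :=
    Nat.cast_ne_zero.2 (Nat.choose_pos (by omega)).ne'
  have hm : ((m.factorial : ℕ) : ℂ) ≠ 0 := Nat.cast_ne_zero.2 m.factorial_ne_zero
  have hns : (((n - (t + m)).factorial : ℕ) : ℂ) ≠ 0 :=
    Nat.cast_ne_zero.2 (n - (t + m)).factorial_ne_zero
  push_cast
  field_simp



/-- The function `Φ_t(X) = ∑_{k=k₀}^{min(j,t)} (-1)^k C(s-j,t-k) C(j,k) γ_t^k`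
(with `j = d(X₀,X)`, `k₀ = max 0 (t+j-s)`,
`γ_t^k = C(s,t)⁻¹ (s-t+k)!(n-s-k)!/((s-t)!(n-s)!)`) is the spherical function of the
irreducible component `H^t = (R_{s-1}∘⋯∘R_t)(Ker R_{t-1}*)` of `L²(P_s)`:
`Φ_t(X₀) = 1`, `Φ_t` is invariant under the stabilizer of `X₀`, and `Φ_t ∈ H^t`
(here `s = t + m`; for `t = 0` the kernel condition is vacuous and `H^0` is the image
of `L²(P_0)`). -/
theorem stmt8 (n t m : ℕ) (hs : 2 * (t + m) ≤ n) (X₀ : Pset n (t + m)) :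
    ∀ Φ : Pset n (t + m) → ℂ,
      (Φ = fun X =>
        ∑ k ∈ Finset.Icc (t + (((t + m) - (X₀.1 ∩ X.1).card)) - (t + m))
            (min ((t + m) - (X₀.1 ∩ X.1).card) t),
          (-1 : ℂ) ^ k *
            (Nat.choose ((t + m) - ((t + m) - (X₀.1 ∩ X.1).card)) (t - k)) *
            (Nat.choose ((t + m) - (X₀.1 ∩ X.1).card) k) *
            ((Nat.factorial (m + k) * Nat.factorial (n - (t + m) - k) : ℂ) /
              ((Nat.choose (t + m) t) * Nat.factorial m * Nat.factorial (n - (t + m))))) →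
      Φ X₀ = 1 ∧
      (∀ σ : Equiv.Perm (Fin n), X₀.1.image ⇑σ = X₀.1 →
        ∀ (X : Pset n (t + m)) (hX : (X.1.image ⇑σ).card = t + m),
          Φ ⟨X.1.image ⇑σ, hX⟩ = Φ X) ∧
      (∃ h : Pset n t → ℂ,
        (∀ Z : Finset (Fin n), Z.card + 1 = t →
          (∑ Y : Pset n t, if Z ⊆ Y.1 then h Y else 0) = 0) ∧
        Φ = RadonIter n t m h) := by
  classical
  intro Φ hΦ
  subst hΦ
  refine ⟨?_, ?_, ?_⟩
  · -- value at `X₀`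
    have h0 : (X₀.1 ∩ X₀.1).card = t + m := by rw [Finset.inter_self]; exact X₀.2
    have hC : (((t + m).choose t : ℕ) : ℂ) ≠ 0 :=
      Nat.cast_ne_zero.2 (Nat.choose_pos (by omega)).ne'
    have hm : ((m.factorial : ℕ) : ℂ) ≠ 0 := Nat.cast_ne_zero.2 m.factorial_ne_zero
    have hns : (((n - (t + m)).factorial : ℕ) : ℂ) ≠ 0 :=
      Nat.cast_ne_zero.2 (n - (t + m)).factorial_ne_zero
    simp only [h0, Nat.sub_self, Nat.add_zero, Nat.sub_zero]
    rw [show t - (t + m) = 0 by omega, show min 0 t = 0 by omega, Finset.Icc_self,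
      Finset.sum_singleton]
    simp only [pow_zero, Nat.sub_zero, Nat.choose_self, Nat.choose_zero_right,
      Nat.add_zero, Nat.cast_one, one_mul, mul_one]
    field_simp
  · -- invariance under the stabilizer of `X₀`
    intro σ hσ X hX
    have hcard : (X₀.1 ∩ (X.1.image ⇑σ)).card = (X₀.1 ∩ X.1).card := by
      conv_lhs => rw [← hσ]
      rw [← Finset.image_inter X₀.1 X.1 σ.injective,
        Finset.card_image_of_injective _ σ.injective]
    simp only [hcard]
  · -- membership in `H^t`
    exact ⟨fun Y => sphF n t m ((Y.1 ∩ X₀.1).card),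
      fun Z hZ => aux_kernel n t m hs X₀ Z hZ,
      funext fun X => (aux_main n t m hs X₀ X).symm⟩
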